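/- The set N = {(M,N) ∈ ℂ⁶ : M₁ = M₃ = N₂ = 0, N₁² + N₃² = 1} is invariant under the flow of the Euler-Poisson equations dM/dt = M × (J M) + N × L, dN/dt = N × (J M), where L = (1,0,0) and J is the symmetric matrix with rows (a,0,2d), (0,1,0), (2d,0,c); moreover N ⊂ {⟨M,N⟩ = 0}, and the restricted dynamics is dM₂/dt = N₃, dN₁/dt = −M₂N₃, dN₃/dt = M₂N₁. -/

import Mathlib

open Matrix

/-- The set `𝒩 = {(M,N) ∈ ℂ⁶ : M₁ = M₃ = N₂ = 0, N₁² + N₃² = 1}` is invariant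
under the Euler-Poisson vector field with `L = (1,0,0)` and
`J = [[a,0,2d],[0,1,0],[2d,0,c]]`: at every point of `𝒩` the vector field is
tangent to `𝒩` (its `M₁`, `M₃`, `N₂` components vanish and the derivative of
`N₁² + N₃²` along the field vanishes); moreover `𝒩 ⊂ {⟨M,N⟩ = 0}`, and the
restricted dynamics is `dM₂/dt = N₃`, `dN₁/dt = −M₂N₃`, `dN₃/dt = M₂N₁`. -/
theorem invariant_manifold_first_solution
    (a c d : ℂ) (M N : Fin 3 → ℂ)
    (hM1 : M 0 = 0) (hM3 : M 2 = 0) (hN2 : N 1 = 0)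
    (hcirc : N 0 ^ 2 + N 2 ^ 2 = 1) :
    let J : Matrix (Fin 3) (Fin 3) ℂ := !![a, 0, 2*d; 0, 1, 0; 2*d, 0, c]
    let dM : Fin 3 → ℂ := crossProduct M (J.mulVec M) + crossProduct N ![1, 0, 0]
    let dN : Fin 3 → ℂ := crossProduct N (J.mulVec M)
    dM 0 = 0 ∧ dM 2 = 0 ∧ dN 1 = 0 ∧
    2 * N 0 * dN 0 + 2 * N 2 * dN 2 = 0 ∧
    M ⬝ᵥ N = 0 ∧
    dM 1 = N 2 ∧ dN 0 = -(M 1 * N 2) ∧ dN 2 = M 1 * N 0 := by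
  intro J dM dN
  have e0 : (0:Fin 3) = ⟨0,by norm_num⟩ := rfl
  simp only [J, dM, dN, cross_apply, Matrix.mulVec, dotProduct,
    Fin.sum_univ_three, Matrix.cons_val', Matrix.cons_val_zero, Matrix.cons_val_one,
    Matrix.head_cons, Matrix.empty_val', Matrix.cons_val_fin_one, Matrix.cons_val_two,
    Matrix.tail_cons, Pi.add_apply, hM1, hM3, hN2]
  refine ⟨?_, ?_, ?_, ?_, ?_, ?_, ?_, ?_⟩ <;> norm_num <;> ring
  all_goals exact Or.inr (Or.inl rfl)
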